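/- arXiv:math/9809075 — 6 statements merged into one kernel-verified Lean document; each statement's English description precedes it below -/
import Mathlib

section
/- For every integer k ≥ 3, a position u of the k-heap game is a P-position if and only if u ∈ ⋃_{n=0}^∞ P_n; that is, the P-positions are exactly the positions of the form (T_n, m_1, …, m_{k-1}) where (m_1, …, m_{k-1}) ranges over all unordered partitions of (k-1)·T_n + n into k-1 parts each of size ≥ T_n. -/
/-- `T n` is the `n`-th triangular number `n(n+1)/2`. -/
def T (n : ℕ) : ℕ := n * (n + 1) / 2

/-- `Pset k n` is the set `Pₙ` of positions `(T n, m₁, …, m_{k-1})` (nondecreasing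
`k`-tuples) whose first component is `T n` and whose remaining components sum to
`(k-1)·T n + n` (each of them is automatically `≥ T n` by monotonicity). -/
def Pset (k : ℕ) [NeZero k] (n : ℕ) : Set (Fin k → ℕ) :=
  {u | Monotone u ∧ u 0 = T n ∧
    ∑ i ∈ Finset.univ.erase 0, u i = (k - 1) * T n + n}

/-- A raw move of the `k`-heap game (before re-sorting): either (i) remove a positive
number of tokens from at least one and at most `k-1` heaps, or (ii) remove the same
positive number `t` of tokens from all `k` heaps (`t` at most the smallest heap). -/
def MoveRaw (k : ℕ) (u w : Fin k → ℕ) : Prop :=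
  ((∀ i, w i ≤ u i) ∧ u ≠ w ∧
    (Finset.univ.filter fun i => w i < u i).card ≤ k - 1)
  ∨ (∃ t > 0, ∀ i, u i = w i + t)

/-- `v` is a follower of `u`: `v` is obtained from `u` by one move, with
the components re-sorted into nondecreasing order. -/
def Follower (k : ℕ) (u v : Fin k → ℕ) : Prop :=
  ∃ w : Fin k → ℕ, MoveRaw k u w ∧ Monotone v ∧ ∃ σ : Equiv.Perm (Fin k), v = w ∘ σ

lemma two_mul_T (n : ℕ) : 2 * T n = n * (n + 1) :=
  Nat.mul_div_cancel' ((Nat.even_mul_succ_self n).two_dvd)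

lemma T_succ (n : ℕ) : T (n + 1) = T n + (n + 1) := by
  have h1 := two_mul_T n
  have h2 := two_mul_T (n + 1)
  have h3 : (n + 1) * (n + 1 + 1) = n * (n + 1) + 2 * (n + 1) := by ring
  omega

lemma T_strictMono : StrictMono T :=
  strictMono_nat_of_lt_succ fun n => by rw [T_succ]; omega

lemma T_mono : Monotone T := T_strictMono.monotone

lemma exists_T_interval (a : ℕ) : ∃ n, T n ≤ a ∧ a < T (n + 1) := by
  induction a with
  | zero => exact ⟨0, le_refl 0, by rw [T_succ]; omega⟩
  | succ a ih =>
    obtain ⟨n, h1, h2⟩ := ih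
    rcases Nat.lt_or_ge (a + 1) (T (n + 1)) with h | h
    · exact ⟨n, by omega, h⟩
    · exact ⟨n + 1, h, by rw [T_succ (n+1)]; omega⟩

section game
variable {k : ℕ} [NeZero k]

lemma sum_split0 (f : Fin k → ℕ) :
    ∑ i, f i = f 0 + ∑ i ∈ Finset.univ.erase 0, f i :=
  (Finset.add_sum_erase _ f (Finset.mem_univ 0)).symm

lemma km1_mul (c : ℕ) : (k - 1) * c + c = k * c := by
  obtain ⟨k', rfl⟩ : ∃ k', k = k' + 1 := ⟨k - 1, (Nat.succ_pred_eq_of_pos (NeZero.pos k)).symm⟩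
  rw [Nat.succ_sub_one]; ring

lemma sum_of_Pset {n : ℕ} {z : Fin k → ℕ} (hz : z ∈ Pset k n) :
    ∑ i, z i = k * T n + n := by
  obtain ⟨hm, h0, hs⟩ := hz
  rw [sum_split0 z, h0, hs]
  have := km1_mul (k := k) (T n)
  omega

lemma Pset_le {n : ℕ} {z : Fin k → ℕ} (hz : z ∈ Pset k n) (i : Fin k) : T n ≤ z i :=
  hz.2.1 ▸ hz.1 (Fin.zero_le i)

lemma follower_sum_lt {u v : Fin k → ℕ} (h : Follower k u v) : ∑ i, v i < ∑ i, u i := by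
  obtain ⟨w, hmove, hmono, σ, rfl⟩ := h
  have hw : ∑ i, w (σ i) = ∑ i, w i := Equiv.sum_comp σ w
  show ∑ i, w (σ i) < ∑ i, u i
  rw [hw]
  rcases hmove with ⟨hle, hne, _⟩ | ⟨t, ht, heq⟩
  · refine Finset.sum_lt_sum (fun i _ => hle i) ?_
    obtain ⟨i, hi⟩ := Function.ne_iff.mp hne
    exact ⟨i, Finset.mem_univ i, (hle i).lt_of_ne (fun h => hi h.symm)⟩
  · have hsum : ∑ i, u i = ∑ i, w i + k * t := by
      rw [Finset.sum_congr rfl (fun i _ => heq i), Finset.sum_add_distrib,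
        Finset.sum_const, Finset.card_univ, Fintype.card_fin, smul_eq_mul]
    have hk0 : 0 < k := NeZero.pos k
    have : k ≤ k * t := Nat.le_mul_of_pos_right k ht
    omega

lemma not_P_follower (hk : 3 ≤ k) {u v : Fin k → ℕ} {n m : ℕ}
    (hu : u ∈ Pset k n) (hf : Follower k u v) (hv : v ∈ Pset k m) : False := by
  have hsu : ∑ i, u i = k * T n + n := sum_of_Pset hu
  have hsv : ∑ i, v i = k * T m + m := sum_of_Pset hv
  have hlt : ∑ i, v i < ∑ i, u i := follower_sum_lt hf
  have hvc : ∀ i, T m ≤ v i := Pset_le hv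
  obtain ⟨w, hmove, hmono, σ, hveq⟩ := hf
  have hwv : ∀ j, w j = v (σ.symm j) := fun j => by
    rw [hveq]; simp
  rcases hmove with ⟨hle, hne, hcard⟩ | ⟨t, ht, heq⟩
  · obtain ⟨j, hj⟩ : ∃ j, w j = u j := by
      by_contra hno
      push_neg at hno
      have hall : ∀ i : Fin k, w i < u i := fun i => (hle i).lt_of_ne (hno i)
      have heq2 : (Finset.univ.filter fun i => w i < u i) = Finset.univ :=
        Finset.filter_true_of_mem (fun i _ => hall i)
      rw [heq2, Finset.card_univ, Fintype.card_fin] at hcard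
      omega
    have h1 : T n ≤ u j := Pset_le hu j
    have h2 : ∑ i, v i = v (σ.symm j) + ∑ i ∈ Finset.univ.erase (σ.symm j), v i :=
      (Finset.add_sum_erase _ v (Finset.mem_univ _)).symm
    have h3 : (k - 1) * T m ≤ ∑ i ∈ Finset.univ.erase (σ.symm j), v i := by
      have h := Finset.card_nsmul_le_sum (Finset.univ.erase (σ.symm j)) v (T m)
        (fun i _ => hvc i)
      rwa [Finset.card_erase_of_mem (Finset.mem_univ _), Finset.card_univ,
        Fintype.card_fin, smul_eq_mul] at h
    have h4 : u j ≤ v (σ.symm j) := le_of_eq (hj ▸ (hwv j))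
    have hk1 : (k - 1) * T m + T m = k * T m := km1_mul _
    have h5 : T n ≤ T m + m := by omega
    have h6 : n ≤ m := by
      by_contra hc
      push_neg at hc
      have h7 : T (m + 1) ≤ T n := T_mono hc
      rw [T_succ] at h7; omega
    have h7 : k * T n ≤ k * T m := Nat.mul_le_mul_left k (T_mono h6)
    omega
  · have hsum : ∑ i, u i = ∑ i, w i + k * t := by
      rw [Finset.sum_congr rfl (fun i _ => heq i), Finset.sum_add_distrib,
        Finset.sum_const, Finset.card_univ, Fintype.card_fin, smul_eq_mul]
    have hws : ∑ i, w i = ∑ i, v i := by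
      rw [hveq]; exact (Equiv.sum_comp σ w).symm
    have h0 : v 0 ≤ v (σ.symm 0) := hv.1 (Fin.zero_le _)
    have h1 : v (σ.symm 0) = w 0 := (hwv 0).symm
    have h2 : u 0 = w 0 + t := heq 0
    have h3 : T m + t ≤ T n := by
      have e1 := hv.2.1; have e2 := hu.2.1; omega
    have h4 : k * (T m + t) ≤ k * T n := Nat.mul_le_mul_left k h3
    have h5 : k * (T m + t) = k * T m + k * t := by ring
    have h6 : n ≤ m := by omega
    have h7 : k * T n ≤ k * T m := Nat.mul_le_mul_left k (T_mono h6)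
    have h8 : k ≤ k * t := Nat.le_mul_of_pos_right k ht
    omega


section finfacts
variable (k : ℕ) [NeZero k]

lemma fin_ne01 (hk : 3 ≤ k) : ((0 : Fin k)) ≠ 1 := by
  have h0 := Fin.val_zero k
  have h1 := Fin.val_one' k
  have hm : 1 % k = 1 := Nat.mod_eq_of_lt (by omega)
  intro h; rw [Fin.ext_iff, h0, h1, hm] at h; omega

lemma fin_le01 : ((0 : Fin k)) ≤ 1 := by
  have h0 := Fin.val_zero k
  rw [Fin.le_def, h0]; omega

lemma fin_one_le (hk : 3 ≤ k) (i : Fin k) (h1 : i ≠ 0) (h2 : i ≠ 1) : (1 : Fin k) ≤ i := by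
  have h0 := Fin.val_zero k
  have hv1 := Fin.val_one' k
  have hm : 1 % k = 1 := Nat.mod_eq_of_lt (by omega)
  have h1' : i.val ≠ 0 := fun h => h1 (Fin.ext (by rw [h, h0]))
  have h2' : i.val ≠ 1 := by simpa [Fin.ext_iff, hv1, hm] using h2
  rw [Fin.le_def, hv1, hm]
  omega
end finfacts

lemma distrib {ι : Type*} [DecidableEq ι] (I : Finset ι) :
    ∀ (l h : ι → ℕ) (R : ℕ), (∀ i ∈ I, l i ≤ h i) →
    (∑ i ∈ I, l i) ≤ R → R ≤ ∑ i ∈ I, h i →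
    ∃ x : ι → ℕ, (∀ i ∈ I, l i ≤ x i ∧ x i ≤ h i) ∧ ∑ i ∈ I, x i = R := by
  induction I using Finset.induction_on with
  | empty =>
    intro l h R _ h1 h2
    simp only [Finset.sum_empty] at h1 h2 ⊢
    exact ⟨fun _ => 0, by simp, by omega⟩
  | insert _ _ hiI ih =>
    rename_i i I
    intro l h R hlh h1 h2
    rw [Finset.sum_insert hiI] at h1 h2
    have hli : l i ≤ h i := hlh i (Finset.mem_insert_self i I)
    have hlh' : ∀ j ∈ I, l j ≤ h j := fun j hj => hlh j (Finset.mem_insert_of_mem hj)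
    have hS : (∑ j ∈ I, l j) ≤ ∑ j ∈ I, h j := Finset.sum_le_sum hlh'
    set Sl := ∑ j ∈ I, l j with hSl
    set Sh := ∑ j ∈ I, h j with hSh
    set R' := min (R - l i) Sh with hR'
    set xi := R - R' with hxi
    have hmin : R' = R - l i ∨ R' = Sh := by
      rcases le_total (R - l i) Sh with hc | hc
      · exact Or.inl (min_eq_left hc)
      · exact Or.inr (min_eq_right hc)
    obtain ⟨x, hx, hxs⟩ := ih l h R' hlh' (by omega) (by omega)
    refine ⟨Function.update x i xi, ?_, ?_⟩
    · intro j hj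
      rcases Finset.mem_insert.mp hj with rfl | hj'
      · rw [Function.update_self]; omega
      · rw [Function.update_of_ne (by rintro rfl; exact hiI hj')]
        exact hx j hj'
    · have hupd : ∑ j ∈ I, Function.update x i xi j = ∑ j ∈ I, x j :=
        Finset.sum_congr rfl (fun j hj => Function.update_of_ne (by rintro rfl; exact hiI hj) _ _)
      rw [Finset.sum_insert hiI, Function.update_self, hupd, hxs]
      omega

section game
variable {k : ℕ} [NeZero k]

lemma build_follower (hk : 3 ≤ k) {u x : Fin k → ℕ} (hu : Monotone u) (n : ℕ)
    (hx0 : ∃ i, x i = T n) (hxl : ∀ i, T n ≤ x i) (hxle : ∀ i, x i ≤ u i)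
    (hxs : ∑ i, x i = k * T n + n) (hlt : ∑ i, x i < ∑ i, u i)
    (hfix : ∃ j, x j = u j) :
    ∃ v, Follower k u v ∧ v ∈ Pset k n := by
  obtain ⟨i0, hi0⟩ := hx0
  obtain ⟨j, hj⟩ := hfix
  set σ := Tuple.sort x with hσ
  have hmonov : Monotone (x ∘ σ) := Tuple.monotone_sort x
  have hne : u ≠ x := by
    intro h; rw [h] at hlt; exact lt_irrefl _ hlt
  have hcard : (Finset.univ.filter fun i => x i < u i).card ≤ k - 1 := by
    have hsub : (Finset.univ.filter fun i => x i < u i) ⊆ Finset.univ.erase j := by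
      intro i hi
      rw [Finset.mem_filter] at hi
      refine Finset.mem_erase.mpr ⟨?_, Finset.mem_univ i⟩
      rintro rfl
      rw [hj] at hi
      exact lt_irrefl _ hi.2
    calc (Finset.univ.filter fun i => x i < u i).card
        ≤ (Finset.univ.erase j).card := Finset.card_le_card hsub
      _ = k - 1 := by
          rw [Finset.card_erase_of_mem (Finset.mem_univ _), Finset.card_univ, Fintype.card_fin]
  have hv0 : (x ∘ σ) 0 = T n := by
    refine le_antisymm ?_ (hxl _)
    have h := hmonov (Fin.zero_le (σ.symm i0))
    simp only [Function.comp_apply, Equiv.apply_symm_apply] at h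
    rw [hi0] at h
    exact h
  have hvs : ∑ i, (x ∘ σ) i = k * T n + n := by
    show ∑ i, x (σ i) = _
    rw [Equiv.sum_comp σ x, hxs]
  refine ⟨x ∘ σ, ⟨x, Or.inl ⟨hxle, hne, hcard⟩, hmonov, σ, rfl⟩, hmonov, hv0, ?_⟩
  have h1 := sum_split0 (x ∘ σ)
  have h2 := km1_mul (k := k) (T n)
  omega


lemma exists_P_follower (hk : 3 ≤ k) {u : Fin k → ℕ} (hu : Monotone u)
    (hnp : ∀ n, u ∉ Pset k n) : ∃ v, Follower k u v ∧ ∃ m, v ∈ Pset k m := by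
  have hui : ∀ i, u 0 ≤ u i := fun i => hu (Fin.zero_le i)
  have hka : k * u 0 ≤ ∑ i, u i := by
    have h := Finset.card_nsmul_le_sum Finset.univ u (u 0) (fun i _ => hui i)
    rwa [Finset.card_univ, Fintype.card_fin, smul_eq_mul] at h
  obtain ⟨n, hn1, hn2⟩ := exists_T_interval (u 0)
  rw [T_succ] at hn2
  set s := ∑ i, u i with hs
  set m0 := s - k * u 0 with hm0
  by_cases hc : T m0 < u 0
  · -- uniform subtraction move
    set t := u 0 - T m0 with htdef
    have htpos : 0 < t := by omega
    have htle : ∀ i, t ≤ u i := fun i => le_trans (by omega) (hui i)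
    have hmono : Monotone (fun i => u i - t) := fun i j hij => Nat.sub_le_sub_right (hu hij) t
    refine ⟨fun i => u i - t,
      ⟨fun i => u i - t, Or.inr ⟨t, htpos, fun i => (Nat.sub_add_cancel (htle i)).symm⟩,
        hmono, Equiv.refl _, rfl⟩, m0, hmono, by show u 0 - t = T m0; omega, ?_⟩
    have hsub : ∑ i ∈ Finset.univ.erase 0, (u i - t) =
        (∑ i ∈ Finset.univ.erase 0, u i) - ∑ _i ∈ (Finset.univ : Finset (Fin k)).erase 0, t :=
      Finset.sum_tsub_distrib _ (fun i _ => htle i)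
    have hconst : ∑ _i ∈ (Finset.univ : Finset (Fin k)).erase 0, t = (k - 1) * t := by
      rw [Finset.sum_const, Finset.card_erase_of_mem (Finset.mem_univ _), Finset.card_univ,
        Fintype.card_fin, smul_eq_mul]
    have h1 := sum_split0 u
    have h2 : k * u 0 = (k - 1) * u 0 + u 0 := (km1_mul _).symm
    have h3 : (k - 1) * u 0 = (k - 1) * t + (k - 1) * T m0 := by
      rw [show u 0 = t + T m0 by omega]; ring
    show ∑ i ∈ Finset.univ.erase 0, (u i - t) = (k - 1) * T m0 + m0
    omega
  · by_cases hc2 : T m0 = u 0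
    · exfalso
      refine hnp m0 ⟨hu, hc2.symm, ?_⟩
      have h1 := sum_split0 u
      have h2 : k * u 0 = (k - 1) * u 0 + u 0 := (km1_mul _).symm
      have h3 : (k - 1) * T m0 = (k - 1) * u 0 := by rw [hc2]
      omega
    · -- type (i) move to P_n
      obtain ⟨k3, rfl⟩ : ∃ k3, k = k3 + 3 := ⟨k - 3, by omega⟩
      have hc3 : u 0 < T m0 := by omega
      have hnm : n < m0 := T_strictMono.lt_iff_lt.mp (lt_of_le_of_lt hn1 hc3)
      have hsge : (k3 + 3) * u 0 + n + 1 ≤ s := by omega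
      have hkTn : (k3 + 3) * T n ≤ (k3 + 3) * u 0 := Nat.mul_le_mul_left _ hn1
      have h01 : (0 : Fin (k3 + 3)) ≠ 1 := fin_ne01 _ hk
      have h10 : (1 : Fin (k3 + 3)) ≠ 0 := h01.symm
      have hu01 : u 0 ≤ u 1 := hu (fin_le01 _)
      set I : Finset (Fin (k3 + 3)) := (Finset.univ.erase 0).erase 1 with hI
      have h1mem : (1 : Fin (k3 + 3)) ∈ Finset.univ.erase 0 :=
        Finset.mem_erase.mpr ⟨h10, Finset.mem_univ _⟩
      have hcardI : I.card = k3 + 1 := by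
        rw [hI, Finset.card_erase_of_mem h1mem,
          Finset.card_erase_of_mem (Finset.mem_univ _), Finset.card_univ, Fintype.card_fin]
        omega
      have hmemI : ∀ i ∈ I, i ≠ 0 ∧ i ≠ 1 := by
        intro i hi
        rw [hI, Finset.mem_erase, Finset.mem_erase] at hi
        exact ⟨hi.2.1, hi.1⟩
      have hmemI' : ∀ i : Fin (k3 + 3), i ≠ 0 → i ≠ 1 → i ∈ I := by
        intro i hi0 hi1
        rw [hI, Finset.mem_erase, Finset.mem_erase]
        exact ⟨hi1, hi0, Finset.mem_univ i⟩
      have huI : ∀ i ∈ I, u 1 ≤ u i := fun i hi =>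
        hu (fin_one_le _ hk i (hmemI i hi).1 (hmemI i hi).2)
      have hsplit : ∀ f : Fin (k3 + 3) → ℕ, ∑ i, f i = f 0 + f 1 + ∑ i ∈ I, f i := by
        intro f
        rw [sum_split0 f, ← Finset.add_sum_erase _ f h1mem, ← hI, add_assoc]
      have hE : s = u 0 + u 1 + ∑ i ∈ I, u i := hsplit u
      have hsumconst : ∑ _i ∈ I, T n = (k3 + 1) * T n := by
        rw [Finset.sum_const, hcardI, smul_eq_mul]
      have p1 : (k3 + 3) * T n = (k3 + 1) * T n + T n + T n := by ring
      have p2 : (k3 + 3) * u 0 = (k3 + 2) * u 0 + u 0 := by ring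
      have p3 : (k3 + 2) * T n ≤ (k3 + 2) * u 0 := Nat.mul_le_mul_left _ hn1
      have p4 : (k3 + 3) * T n = (k3 + 2) * T n + T n := by ring
      have hlb : ∀ i ∈ I, (fun _ : Fin (k3+3) => T n) i ≤ u i := fun i hi =>
        le_trans hn1 (hui i)
      by_cases hb : u 1 ≤ T n + n
      · -- fix heap 1
        set R := (k3 + 3) * T n + n - (T n + u 1) with hR
        have hReq : T n + u 1 + R = (k3 + 3) * T n + n := by omega
        have hR1 : (∑ _i ∈ I, T n) ≤ R := by rw [hsumconst]; omega
        have hR2 : R ≤ ∑ i ∈ I, u i := by omega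
        obtain ⟨g, hg, hgs⟩ := distrib I (fun _ => T n) u R hlb hR1 hR2
        set x : Fin (k3 + 3) → ℕ := fun i => if i = 0 then T n else if i = 1 then u 1 else g i
          with hx
        have hxI : ∀ i ∈ I, x i = g i := by
          intro i hi
          rw [hx]; simp only [if_neg (hmemI i hi).1, if_neg (hmemI i hi).2]
        have e0 : x 0 = T n := by simp [hx]
        have e1 : x 1 = u 1 := by simp [hx, h10]
        have hxs : ∑ i, x i = (k3 + 3) * T n + n := by
          rw [hsplit x, Finset.sum_congr rfl hxI, hgs]
          omega
        have hltx : ∑ i, x i < ∑ i, u i := by rw [hxs]; omega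
        have hxl : ∀ i, T n ≤ x i := by
          intro i
          by_cases z0 : i = 0
          · rw [z0, e0]
          · by_cases z1 : i = 1
            · rw [z1, e1]; exact le_trans hn1 hu01
            · have := (hg i (hmemI' i z0 z1)).1
              rwa [hxI i (hmemI' i z0 z1)]
        have hxle : ∀ i, x i ≤ u i := by
          intro i
          by_cases z0 : i = 0
          · rw [z0, e0]; exact hn1
          · by_cases z1 : i = 1
            · rw [z1, e1]
            · have := (hg i (hmemI' i z0 z1)).2
              rwa [hxI i (hmemI' i z0 z1)]
        obtain ⟨v, hf, hp⟩ := build_follower hk hu n ⟨0, e0⟩ hxl hxle hxs hltx ⟨1, e1⟩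
        exact ⟨v, hf, n, hp⟩
      · -- fix heap 0
        push_neg at hb
        have hEI : (k3 + 1) * (T n + n + 1) ≤ ∑ i ∈ I, u i := by
          have h := Finset.card_nsmul_le_sum I u (T n + n + 1)
            (fun i hi => le_trans (by omega) (huI i hi))
          rwa [hcardI, smul_eq_mul] at h
        have p6 : (k3 + 1) * (T n + n + 1) = (k3 + 1) * T n + (k3 + 1) * n + (k3 + 1) := by ring
        have p7 : n ≤ (k3 + 1) * n := Nat.le_mul_of_pos_left n (by omega)
        set R := (k3 + 3) * T n + n - (T n + u 0) with hR
        have hReq : T n + u 0 + R = (k3 + 3) * T n + n := by omega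
        have hR1 : (∑ _i ∈ I, T n) ≤ R := by rw [hsumconst]; omega
        have hR2 : R ≤ ∑ i ∈ I, u i := by omega
        obtain ⟨g, hg, hgs⟩ := distrib I (fun _ => T n) u R hlb hR1 hR2
        set x : Fin (k3 + 3) → ℕ := fun i => if i = 0 then u 0 else if i = 1 then T n else g i
          with hx
        have hxI : ∀ i ∈ I, x i = g i := by
          intro i hi
          rw [hx]; simp only [if_neg (hmemI i hi).1, if_neg (hmemI i hi).2]
        have e0 : x 0 = u 0 := by simp [hx]
        have e1 : x 1 = T n := by simp [hx, h10]
        have hxs : ∑ i, x i = (k3 + 3) * T n + n := by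
          rw [hsplit x, Finset.sum_congr rfl hxI, hgs]
          omega
        have hltx : ∑ i, x i < ∑ i, u i := by rw [hxs]; omega
        have hxl : ∀ i, T n ≤ x i := by
          intro i
          by_cases z0 : i = 0
          · rw [z0, e0]; exact hn1
          · by_cases z1 : i = 1
            · rw [z1, e1]
            · have := (hg i (hmemI' i z0 z1)).1
              rwa [hxI i (hmemI' i z0 z1)]
        have hxle : ∀ i, x i ≤ u i := by
          intro i
          by_cases z0 : i = 0
          · rw [z0, e0]
          · by_cases z1 : i = 1
            · rw [z1, e1]; exact le_trans hn1 (hui 1)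
            · have := (hg i (hmemI' i z0 z1)).2
              rwa [hxI i (hmemI' i z0 z1)]
        obtain ⟨v, hf, hp⟩ := build_follower hk hu n ⟨1, e1⟩ hxl hxle hxs hltx ⟨0, e0⟩
        exact ⟨v, hf, n, hp⟩


end game

/-- For every `k ≥ 3`, a position of the `k`-heap game is a P-position
(i.e. belongs to the unique set `S` such that a position is in `S` iff all its
followers are outside `S`) if and only if it lies in `⋃ n, Pₙ`. -/
theorem heap_game_P_positions (k : ℕ) [NeZero k] (hk : 3 ≤ k)
    (S : Set (Fin k → ℕ))
    (hS : ∀ u : Fin k → ℕ, Monotone u →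
      (u ∈ S ↔ ∀ v, Follower k u v → v ∉ S)) :
    ∀ u : Fin k → ℕ, Monotone u → (u ∈ S ↔ ∃ n, u ∈ Pset k n) := by
  have key : ∀ N, ∀ u : Fin k → ℕ, Monotone u → ∑ i, u i < N →
      (u ∈ S ↔ ∃ n, u ∈ Pset k n) := by
    intro N
    induction N with
    | zero => intro u _ h; omega
    | succ N ih =>
      intro u hu hN
      have hfoll : ∀ v, Follower k u v → (v ∈ S ↔ ∃ n, v ∈ Pset k n) := by
        intro v hv
        obtain ⟨w, hm, hmono, σ, hveq⟩ := hv
        exact ih v hmono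
          (by have := follower_sum_lt (⟨w, hm, hmono, σ, hveq⟩ : Follower k u v); omega)
      rw [hS u hu]
      constructor
      · intro hall
        by_contra hnp
        push_neg at hnp
        obtain ⟨v, hfv, m, hvm⟩ := exists_P_follower hk hu (fun n h => hnp n h)
        exact hall v hfv ((hfoll v hfv).mpr ⟨m, hvm⟩)
      · rintro ⟨n, hn⟩ v hfv hvS
        obtain ⟨m, hvm⟩ := (hfoll v hfv).mp hvS
        exact not_P_follower hk hn hfv hvm
  intro u hu
  exact key (∑ i, u i + 1) u hu (by omega)
end game
end

section
/- Let k ≥ 3 and n ∈ ℕ. Every integer t in the semi-closed interval T_n ≤ t < T_{n+1} appears as a component of some position in P_n; explicitly, writing t = T_n + j with 0 ≤ j ≤ n, the multiset consisting of k−3 copies of T_n together with T_n + n − j and T_n + j is a partition of (k-1)·T_n + n with all parts ≥ T_n containing t. -/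
/-- Lemma 2, first part: every integer `t` with `T n ≤ t < T (n+1)`
appears as a component of some position in `Pₙ`; explicitly, writing `t = T n + j`
with `0 ≤ j ≤ n`, the multiset of `k-3` copies of `T n` together with `T n + (n-j)`
and `T n + j` is a partition of `(k-1)·T n + n` into `k-1` parts all `≥ T n`
containing `t`. -/
theorem component_exists_in_Pn (k : ℕ) [NeZero k] (hk : 3 ≤ k) (n t : ℕ)
    (ht1 : T n ≤ t) (ht2 : t < T (n + 1)) :
    ∃ j ≤ n, t = T n + j ∧
      (Multiset.card (Multiset.replicate (k - 3) (T n) + {T n + (n - j), T n + j})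
          = k - 1 ∧
        (∀ x ∈ Multiset.replicate (k - 3) (T n) + ({T n + (n - j), T n + j} : Multiset ℕ),
          T n ≤ x) ∧
        (Multiset.replicate (k - 3) (T n) + ({T n + (n - j), T n + j} : Multiset ℕ)).sum
          = (k - 1) * T n + n ∧
        t ∈ Multiset.replicate (k - 3) (T n) + ({T n + (n - j), T n + j} : Multiset ℕ)) ∧
      ∃ u ∈ Pset k n, ∃ i, u i = t := by
  have hT : T (n + 1) = T n + (n + 1) := by
    show (n+1) * ((n+1)+1) / 2 = n * (n+1) / 2 + (n+1)
    have h2 : (n+1) * ((n+1)+1) = n * (n+1) + 2 * (n+1) := by ring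
    rw [h2]; omega
  obtain ⟨m, rfl⟩ : ∃ m, k = m + 3 := ⟨k - 3, by omega⟩
  set j := t - T n with hjdef
  have hj : j ≤ n := by omega
  have htj : t = T n + j := by omega
  have hm3 : m + 3 - 3 = m := by omega
  have hm1 : m + 3 - 1 = m + 2 := by omega
  rw [hm3, hm1]
  refine ⟨j, hj, htj, ⟨?_, ?_, ?_, ?_⟩, ?_⟩
  · simp
  · intro x hx
    simp [Multiset.mem_replicate] at hx
    rcases hx with h | h | h <;> omega
  · rw [Multiset.sum_add, Multiset.sum_replicate, smul_eq_mul]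
    have h2 : ({T n + (n - j), T n + j} : Multiset ℕ).sum = T n + (n - j) + (T n + j) := by
      rw [Multiset.insert_eq_cons, Multiset.sum_cons, Multiset.sum_singleton]
    rw [h2]
    have hnj : n - j + j = n := Nat.sub_add_cancel hj
    calc m * T n + (T n + (n - j) + (T n + j)) = (m + 2) * T n + ((n - j) + j) := by ring
      _ = (m + 2) * T n + n := by rw [hnj]
  · rw [htj]; simp
  · set a := min j (n - j) with ha
    set b := max j (n - j) with hb
    refine ⟨fun i => T n + (if (i : ℕ) < m + 1 then 0 else if (i : ℕ) < m + 2 then a else b),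
      ⟨?_, ?_, ?_⟩, ?_⟩
    · -- Monotone
      intro i i' hii
      have h' : (i : ℕ) ≤ (i' : ℕ) := hii
      have hab : a ≤ b := min_le_max
      simp only
      split_ifs <;> omega
    · -- u 0 = T n
      have : ((0 : Fin (m + 3)) : ℕ) = 0 := rfl
      simp [this]
    · -- sum
      have h0 : ((0 : Fin (m + 3)) : ℕ) = 0 := rfl
      have hmem : (0 : Fin (m + 3)) ∈ (Finset.univ : Finset (Fin (m + 3))) := Finset.mem_univ _
      have htot : ∑ i : Fin (m + 3),
          (T n + (if (i : ℕ) < m + 1 then 0 else if (i : ℕ) < m + 2 then a else b))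
          = (m + 3) * T n + n := by
        rw [Fin.sum_univ_castSucc, Fin.sum_univ_castSucc]
        have hinner : ∀ i : Fin (m + 1),
            (T n + (if ((Fin.castSucc (Fin.castSucc i) : Fin (m+3)) : ℕ) < m + 1 then 0
              else if ((Fin.castSucc (Fin.castSucc i) : Fin (m+3)) : ℕ) < m + 2 then a else b))
            = T n := by
          intro i
          have : ((Fin.castSucc (Fin.castSucc i) : Fin (m+3)) : ℕ) = (i : ℕ) := rfl
          rw [this, if_pos i.isLt]
          rfl
        rw [Finset.sum_congr rfl (fun i _ => hinner i), Finset.sum_const]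
        have hl : ((Fin.last (m + 2) : Fin (m+3)) : ℕ) = m + 2 := rfl
        have hc : ((Fin.castSucc (Fin.last (m + 1)) : Fin (m+3)) : ℕ) = m + 1 := rfl
        rw [hl, hc]
        simp only [Finset.card_univ, Fintype.card_fin, smul_eq_mul, mul_add]
        have hab : a + b = n := by simp [ha, hb]; omega
        have : ¬ (m + 1 < m + 1) := by omega
        rw [if_neg this, if_pos (by omega : m + 1 < m + 2)]
        rw [if_neg (by omega : ¬ m + 2 < m + 1), if_neg (by omega : ¬ m + 2 < m + 2)]
        ring_nf
        omega
      rw [← Finset.add_sum_erase _ _ hmem] at htot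
      rw [h0] at htot
      simp only [if_pos (by omega : (0:ℕ) < m + 1)] at htot
      show ∑ i ∈ Finset.univ.erase (0 : Fin (m + 3)),
          (T n + (if (i : ℕ) < m + 1 then 0 else if (i : ℕ) < m + 2 then a else b))
          = (m + 3 - 1) * T n + n
      rw [hm1]
      have hr : (m + 3) * T n = (m + 2) * T n + T n := by ring
      linarith
    · -- some component equals t
      by_cases hc : j ≤ n - j
      · refine ⟨⟨m + 1, by omega⟩, ?_⟩
        have h1 : ((⟨m + 1, by omega⟩ : Fin (m + 3)) : ℕ) = m + 1 := rfl
        simp only [h1, if_neg (by omega : ¬ m + 1 < m + 1), if_pos (by omega : m + 1 < m + 2)]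
        have : a = j := by simp [ha]; omega
        omega
      · refine ⟨⟨m + 2, by omega⟩, ?_⟩
        have h1 : ((⟨m + 2, by omega⟩ : Fin (m + 3)) : ℕ) = m + 2 := rfl
        simp only [h1, if_neg (by omega : ¬ m + 2 < m + 1), if_neg (by omega : ¬ m + 2 < m + 2)]
        have : b = j := by simp [hb]; omega
        omega
end

section
/- Let k ≥ 3 and n ∈ ℕ. If (T_n, m_1, …, m_{k-1}) ∈ P_n and t is an integer with 0 < t ≤ T_n, then the position (T_n − t, m_1 − t, …, m_{k-1} − t) lies in P_m for no m ∈ ℕ. -/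
/-- if `(T n, m₁, …, m_{k-1}) ∈ Pₙ` and `0 < t ≤ T n`, then subtracting
`t` from every component gives a position lying in `Pₘ` for no `m`. -/
theorem diagonal_move_from_P_not_P (k : ℕ) [NeZero k] (hk : 3 ≤ k) (n : ℕ)
    (u : Fin k → ℕ) (hu : u ∈ Pset k n) (t : ℕ) (ht0 : 0 < t) (ht : t ≤ T n) :
    ∀ m, (fun i => u i - t) ∉ Pset k m := by
  rintro m ⟨hm, h0, hs⟩
  obtain ⟨hmono, h0u, hsum⟩ := hu
  simp only at h0
  have htn : T n = T m + t := by omega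
  have hge : ∀ i, t ≤ u i := fun i => ht.trans (h0u ▸ hmono (Fin.zero_le i))
  have hcard : (Finset.univ.erase (0 : Fin k)).card = k - 1 := by
    rw [Finset.card_erase_of_mem (Finset.mem_univ _), Finset.card_univ, Fintype.card_fin]
  have hs' : ∑ i ∈ Finset.univ.erase 0, u i = (k - 1) * T m + m + (k - 1) * t := by
    calc ∑ i ∈ Finset.univ.erase 0, u i
        = ∑ i ∈ Finset.univ.erase 0, ((u i - t) + t) :=
          Finset.sum_congr rfl fun i _ => (Nat.sub_add_cancel (hge i)).symm
      _ = (∑ i ∈ Finset.univ.erase 0, (u i - t)) + (k - 1) * t := by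
          rw [Finset.sum_add_distrib, Finset.sum_const, hcard, smul_eq_mul, mul_comm]
      _ = (k - 1) * T m + m + (k - 1) * t := by rw [hs]
  rw [hsum, htn, mul_add] at hs'
  have hnm : n = m := by omega
  subst hnm
  omega
end

section
/- Let k ≥ 3 and n ∈ ℕ. Suppose (T_n, m_1, …, m_{k-1}) is a position with T_n ≤ m_1 ≤ … ≤ m_{k-1} and m_1 + … + m_{k-1} = (k-1)·T_n + j for some integer j with 0 ≤ j < n. Then subtracting T_n − T_j from every component yields a position in P_j; that is, (T_j, m_1 − (T_n − T_j), …, m_{k-1} − (T_n − T_j)) ∈ P_j. -/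
/-- Case (i) of part (II): if `(T n, m₁, …, m_{k-1})` is a position
with all `mᵢ ≥ T n` and `m₁ + ⋯ + m_{k-1} = (k-1)·T n + j` for some `0 ≤ j < n`,
then subtracting `T n - T j` from every component yields a position in `P_j`. -/
theorem caseI_diagonal_move (k : ℕ) [NeZero k] (hk : 3 ≤ k) (n j : ℕ) (hj : j < n)
    (u : Fin k → ℕ) (hu : Monotone u) (h0 : u 0 = T n)
    (hsum : ∑ i ∈ Finset.univ.erase 0, u i = (k - 1) * T n + j) :
    (fun i => u i - (T n - T j)) ∈ Pset k j := by
  have hT : T j ≤ T n := by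
    unfold T
    exact Nat.div_le_div_right (Nat.mul_le_mul hj.le (by omega))
  set d := T n - T j with hd
  have hdle : ∀ i, d ≤ u i := fun i =>
    le_trans (le_trans (by omega) h0.ge) (hu (Fin.zero_le i))
  have hcard : (Finset.univ.erase (0 : Fin k)).card = k - 1 := by
    rw [Finset.card_erase_of_mem (Finset.mem_univ _), Finset.card_univ, Fintype.card_fin]
  refine ⟨fun a b hab => Nat.sub_le_sub_right (hu hab) _, by simp [h0]; omega, ?_⟩
  have key : ∑ i ∈ Finset.univ.erase 0, u i
      = (∑ i ∈ Finset.univ.erase 0, (u i - d)) + (k - 1) * d := by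
    rw [← hcard, ← smul_eq_mul, ← Finset.sum_const, ← Finset.sum_add_distrib]
    exact Finset.sum_congr rfl fun i _ => by have := hdle i; omega
  have hTn : T n = T j + d := by omega
  rw [hsum, hTn, mul_add] at key
  show ∑ i ∈ Finset.univ.erase 0, (u i - d) = (k - 1) * T j + j
  omega
end

section
/- Let k ≥ 3 and n ∈ ℕ. Suppose (m_0, m_1, …, m_{k-1}) is a position with m_0 = T_n + j for some j with 1 ≤ j ≤ n, m_0 ≤ m_1 ≤ … ≤ m_{k-1}, and L := m_1 + … + m_{k-1} satisfies L ≤ (k-1)·T_n + n + j. Set m := L − (k-1)·m_0. Then 0 ≤ m < n, and subtracting m_0 − T_m from every component yields a position in P_m; that is, (T_m, m_1 − (m_0 − T_m), …, m_{k-1} − (m_0 − T_m)) ∈ P_m. -/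
lemma T_mono_s9 {a b : ℕ} (h : a ≤ b) : T a ≤ T b :=
  Nat.div_le_div_right (Nat.mul_le_mul h (by omega))

/-- Case (ii) of part (II), small-sum case: suppose
`m₀ = T n + j` with `1 ≤ j ≤ n` is the smallest component and
`L = m₁ + ⋯ + m_{k-1} ≤ (k-1)·T n + n + j`.  Then `m := L - (k-1)·m₀` satisfies
`0 ≤ m < n` and subtracting `m₀ - T m` from every component yields a position
in `Pₘ`. -/
theorem caseII_diagonal_move (k : ℕ) [NeZero k] (hk : 3 ≤ k) (n j : ℕ)
    (hj1 : 1 ≤ j) (hj2 : j ≤ n)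
    (u : Fin k → ℕ) (hu : Monotone u) (h0 : u 0 = T n + j)
    (hL : ∑ i ∈ Finset.univ.erase 0, u i ≤ (k - 1) * T n + n + j) :
    ∃ m : ℕ, ∑ i ∈ Finset.univ.erase 0, u i = (k - 1) * u 0 + m ∧ m < n ∧
      (fun i => u i - (u 0 - T m)) ∈ Pset k m := by
  have hcard : (Finset.univ.erase (0 : Fin k)).card = k - 1 := by
    rw [Finset.card_erase_of_mem (Finset.mem_univ _), Finset.card_univ, Fintype.card_fin]
  have hlow : ∀ i, u 0 ≤ u i := fun i => hu (Fin.zero_le i)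
  have hLlow : (k - 1) * u 0 ≤ ∑ i ∈ Finset.univ.erase 0, u i := by
    have := Finset.card_nsmul_le_sum (Finset.univ.erase (0 : Fin k)) u (u 0)
      (fun i _ => hlow i)
    rwa [hcard, smul_eq_mul] at this
  set L := ∑ i ∈ Finset.univ.erase (0 : Fin k), u i with hLdef
  refine ⟨L - (k - 1) * u 0, by omega, ?_, ?_⟩
  · have hKdist : (k - 1) * u 0 = (k - 1) * T n + (k - 1) * j := by rw [h0, Nat.mul_add]
    have hKj : 2 * j ≤ (k - 1) * j := Nat.mul_le_mul_right j (by omega)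
    omega
  · set m := L - (k - 1) * u 0 with hmdef
    have hmn : m ≤ n := by
      have hKdist : (k - 1) * u 0 = (k - 1) * T n + (k - 1) * j := by rw [h0, Nat.mul_add]
      have hKj : 2 * j ≤ (k - 1) * j := Nat.mul_le_mul_right j (by omega)
      omega
    have hTm : T m ≤ u 0 := le_trans (T_mono_s9 hmn) (by omega)
    set d := u 0 - T m with hddef
    have hdTm : d + T m = u 0 := Nat.sub_add_cancel hTm
    refine ⟨?_, ?_, ?_⟩
    · intro a b hab
      exact Nat.sub_le_sub_right (hu hab) _
    · show u 0 - (u 0 - T m) = T m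
      exact Nat.sub_sub_self hTm
    · show ∑ i ∈ Finset.univ.erase 0, (u i - d) = (k - 1) * T m + m
      have hsum : ∑ i ∈ Finset.univ.erase (0 : Fin k), (u i - d) + (k - 1) * d = L := by
        rw [← hcard, ← smul_eq_mul, ← Finset.sum_const, ← Finset.sum_add_distrib]
        exact Finset.sum_congr rfl fun i _ =>
          Nat.sub_add_cancel (le_trans (by omega) (hlow i))
      have hKd : (k - 1) * d + (k - 1) * T m = (k - 1) * u 0 := by
        rw [← Nat.mul_add, hdTm]
      omega
end

section
/- Let k ≥ 3 and n ∈ ℕ. The map sending (T_n, m_1, …, m_{k-1}) to (m_1 − (T_n − 1), …, m_{k-1} − (T_n − 1)) is a bijection from P_n onto the set of nondecreasing (k-1)-tuples (x_1, …, x_{k-1}) of positive integers with x_1 + … + x_{k-1} = n + k − 1 and x_{k-1} ≤ n + 1. Consequently, the number of positions in P_n equals the number p_{k-1}(n+k-1) of partitions of n + k − 1 into exactly k − 1 positive integer parts. -/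
lemma sum_erase_zero {m : ℕ} (u : Fin (m + 1) → ℕ) :
    ∑ i ∈ Finset.univ.erase 0, u i = ∑ i : Fin m, u i.succ := by
  have h1 := Fin.sum_univ_succ u
  have h2 := Finset.add_sum_erase Finset.univ u (Finset.mem_univ 0)
  omega

lemma mono_eq_of_multiset_eq {m : ℕ} {x y : Fin m → ℕ} (hx : Monotone x) (hy : Monotone y)
    (h : (List.ofFn x : Multiset ℕ) = (List.ofFn y : Multiset ℕ)) : x = y :=
  List.ofFn_injective (List.Perm.eq_of_pairwise' (r := (· ≤ ·))
    (List.pairwise_ofFn.mpr fun _ _ hij => hx hij.le)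
    (List.pairwise_ofFn.mpr fun _ _ hij => hy hij.le) (Quotient.exact h))

/-- the map `(T n, m₁, …, m_{k-1}) ↦ (m₁ - (T n - 1), …, m_{k-1} - (T n - 1))`
(here `mᵢ - (T n - 1) = mᵢ + 1 - T n`) is a bijection from `Pₙ` onto the set of
nondecreasing `(k-1)`-tuples of positive integers summing to `n + k - 1` with largest
part `≤ n + 1`; consequently `|Pₙ|` equals the number `p_{k-1}(n+k-1)` of partitions of
`n + k - 1` into exactly `k - 1` positive parts. -/
theorem Pset_card_eq_partitions (k : ℕ) [NeZero k] (hk : 3 ≤ k) (n : ℕ) :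
    Set.BijOn
      (fun (u : Fin k → ℕ) (i : Fin (k - 1)) =>
        u ⟨i.val + 1, by have := i.isLt; omega⟩ + 1 - T n)
      (Pset k n)
      {x : Fin (k - 1) → ℕ | Monotone x ∧ (∀ i, 1 ≤ x i) ∧ (∀ i, x i ≤ n + 1) ∧
        ∑ i, x i = n + k - 1} ∧
    Nat.card (Pset k n) =
      Nat.card {p : Nat.Partition (n + k - 1) // Multiset.card p.parts = k - 1} := by
  obtain ⟨r, rfl⟩ : ∃ r, k = r + 2 := ⟨k - 2, by omega⟩
  have hbij : Set.BijOn
      (fun (u : Fin (r + 2) → ℕ) (i : Fin (r + 2 - 1)) =>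
        u ⟨i.val + 1, by have := i.isLt; omega⟩ + 1 - T n)
      (Pset (r + 2) n)
      {x : Fin (r + 2 - 1) → ℕ | Monotone x ∧ (∀ i, 1 ≤ x i) ∧ (∀ i, x i ≤ n + 1) ∧
        ∑ i, x i = n + (r + 2) - 1} := by
    constructor
    · rintro u ⟨hmono, h0, hsum⟩
      have hge : ∀ i : Fin (r + 2), T n ≤ u i := fun i => h0 ▸ hmono (Fin.zero_le i)
      have hsum' : ∑ i : Fin (r + 1), u i.succ = (r + 1) * T n + n := by
        rw [← sum_erase_zero]; exact hsum
      have hdiff : ∑ i : Fin (r + 1), (u i.succ - T n) = n := by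
        have : ∑ i : Fin (r + 1), (u i.succ - T n) + (r + 1) * T n
            = (r + 1) * T n + n := by
          rw [← hsum']
          calc ∑ i : Fin (r + 1), (u i.succ - T n) + (r + 1) * T n
              = ∑ i : Fin (r + 1), ((u i.succ - T n) + T n) := by
                rw [Finset.sum_add_distrib, Finset.sum_const, Finset.card_univ]
                simp [mul_comm]
            _ = ∑ i : Fin (r + 1), u i.succ :=
                Finset.sum_congr rfl fun i _ => Nat.sub_add_cancel (hge _)
        omega
      have hmax : ∀ j : Fin (r + 1), u j.succ ≤ T n + n := by
        intro j
        have hle : u j.succ ≤ u (Fin.last r).succ :=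
          hmono (Fin.succ_le_succ_iff.mpr (Fin.le_last j))
        have hsplit : ∑ i : Fin r, u (i.castSucc).succ + u (Fin.last r).succ
            = (r + 1) * T n + n := by
          exact (Fin.sum_univ_castSucc (fun i : Fin (r + 1) => u i.succ)).symm.trans hsum'
        have hge' : r * T n ≤ ∑ i : Fin r, u (i.castSucc).succ := by
          calc r * T n = ∑ _i : Fin r, T n := by
                simp [Finset.sum_const, mul_comm]
            _ ≤ _ := Finset.sum_le_sum fun i _ => hge _
        have hmul : (r + 1) * T n = r * T n + T n := by ring
        omega
      refine ⟨?_, ?_, ?_, ?_⟩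
      · intro i j hij
        have h1 : u i.succ ≤ u j.succ := hmono (Fin.succ_le_succ_iff.mpr hij)
        have h2 := hge i.succ
        show u i.succ + 1 - T n ≤ u j.succ + 1 - T n
        omega
      · intro i
        have := hge i.succ
        show 1 ≤ u i.succ + 1 - T n
        omega
      · intro i
        have := hmax i
        show u i.succ + 1 - T n ≤ n + 1
        omega
      · calc ∑ i : Fin (r + 1),
            (u ⟨i.val + 1, by have := i.isLt; omega⟩ + 1 - T n)
            = ∑ i : Fin (r + 1), ((u i.succ - T n) + 1) :=
              Finset.sum_congr rfl fun i _ => by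
                have := hge i.succ
                show u i.succ + 1 - T n = u i.succ - T n + 1
                omega
          _ = n + (r + 2) - 1 := by
              rw [Finset.sum_add_distrib, hdiff]; simp
    constructor
    · rintro u ⟨hmu, h0u, hsu⟩ v ⟨hmv, h0v, hsv⟩ hFeq
      have hgeu : ∀ i : Fin (r + 2), T n ≤ u i := fun i => h0u ▸ hmu (Fin.zero_le i)
      have hgev : ∀ i : Fin (r + 2), T n ≤ v i := fun i => h0v ▸ hmv (Fin.zero_le i)
      funext i
      induction i using Fin.cases with
      | zero => exact h0u.trans h0v.symm
      | succ j =>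
        have h3 : u j.succ + 1 - T n = v j.succ + 1 - T n := congrFun hFeq j
        have h1 := hgeu j.succ
        have h2 := hgev j.succ
        omega
    · rintro x ⟨hmx, hx1, hxle, hxs⟩
      have hx1' : ∀ i : Fin (r + 1), 1 ≤ x i := hx1
      have hxs' : ∑ i : Fin (r + 1), x i = n + (r + 2) - 1 := hxs
      set u : Fin (r + 2) → ℕ :=
        Fin.cons (T n) (fun i : Fin (r + 1) => x i - 1 + T n) with hu
      have hu0 : u 0 = T n := Fin.cons_zero _ _
      have husucc : ∀ i : Fin (r + 1), u i.succ = x i - 1 + T n :=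
        fun i => Fin.cons_succ _ _ i
      have hdiff : ∑ i : Fin (r + 1), (x i - 1) = n := by
        have : ∑ i : Fin (r + 1), (x i - 1) + (r + 1) = n + (r + 2) - 1 := by
          rw [← hxs']
          calc ∑ i : Fin (r + 1), (x i - 1) + (r + 1)
              = ∑ i : Fin (r + 1), ((x i - 1) + 1) := by
                rw [Finset.sum_add_distrib]; simp
            _ = ∑ i : Fin (r + 1), x i :=
                Finset.sum_congr rfl fun i _ => Nat.sub_add_cancel (hx1' i)
        omega
      refine ⟨u, ⟨?_, hu0, ?_⟩, ?_⟩
      · -- Monotone u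
        intro i j hij
        induction i using Fin.cases with
        | zero =>
          induction j using Fin.cases with
          | zero => exact le_rfl
          | succ j => rw [hu0, husucc j]; exact Nat.le_add_left _ _
        | succ i =>
          induction j using Fin.cases with
          | zero => exact absurd hij (by simp [Fin.le_def])
          | succ j =>
            rw [husucc i, husucc j]
            have : x i ≤ x j := hmx (Fin.succ_le_succ_iff.mp hij)
            omega
      · rw [sum_erase_zero]
        calc ∑ i : Fin (r + 1), u i.succ
            = ∑ i : Fin (r + 1), (x i - 1 + T n) :=
              Finset.sum_congr rfl fun i _ => husucc i
          _ = (r + 1) * T n + n := by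
              rw [Finset.sum_add_distrib, hdiff, Finset.sum_const, Finset.card_univ]
              simp [mul_comm, Nat.add_comm]
      · funext i
        show u i.succ + 1 - T n = x i
        rw [husucc i]
        have := hx1' i
        omega
  refine ⟨hbij, ?_⟩
  -- cardinality
  have e1 := Set.BijOn.equiv _ hbij
  refine Nat.card_congr (e1.trans ?_)
  set S := {x : Fin (r + 2 - 1) → ℕ | Monotone x ∧ (∀ i, 1 ≤ x i) ∧ (∀ i, x i ≤ n + 1) ∧
      ∑ i, x i = n + (r + 2) - 1} with hS
  have hG : ∀ x : S, (List.ofFn x.1 : Multiset ℕ).sum = n + (r + 2) - 1 := by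
    intro x
    rw [Multiset.sum_coe, List.sum_ofFn]
    exact x.2.2.2.2
  refine Equiv.ofBijective (fun x : S =>
    ⟨⟨(List.ofFn x.1 : Multiset ℕ), ?_, hG x⟩, ?_⟩) ⟨?_, ?_⟩
  · intro q hq
    rw [Multiset.mem_coe, List.mem_ofFn] at hq
    obtain ⟨i, rfl⟩ := hq
    exact x.2.2.1 i
  · simp
  · rintro ⟨x, hx⟩ ⟨y, hy⟩ hxy
    simp only [Subtype.mk.injEq, Nat.Partition.mk.injEq] at hxy
    exact Subtype.ext (mono_eq_of_multiset_eq hx.1 hy.1 hxy)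
  · rintro ⟨p, hp⟩
    set l := p.parts.sort (· ≤ ·) with hl
    have hlen : l.length = r + 1 := by
      rw [hl, Multiset.length_sort, hp]
      omega
    set x : Fin (r + 1) → ℕ := fun i => l.get (Fin.cast hlen.symm i) with hxdef
    have hofn : List.ofFn x = l := by
      apply List.ext_getElem
      · simp [hlen]
      · intro i h1 h2
        rw [List.getElem_ofFn]
        rfl
    have hms : (List.ofFn x : Multiset ℕ) = p.parts := by
      rw [hofn, hl]; exact Multiset.sort_eq _ _
    have hmem : ∀ i : Fin (r + 1), x i ∈ p.parts := by
      intro i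
      rw [← hms, Multiset.mem_coe, hofn]
      have hi : (i : ℕ) < l.length := by omega
      have : x i = l[(i : ℕ)]'hi := rfl
      rw [this]
      exact List.getElem_mem hi
    have hxmono : Monotone x := by
      intro i j hij
      exact (Multiset.pairwise_sort p.parts (· ≤ ·)).rel_get_of_le (by exact hij)
    have hx1 : ∀ i, 1 ≤ x i := fun i => p.parts_pos (hmem i)
    have hxle : ∀ i, x i ≤ n + 1 := by
      intro i
      have hcons : x i + (p.parts.erase (x i)).sum = p.parts.sum := by
        conv_rhs => rw [← Multiset.cons_erase (hmem i)]
        rw [Multiset.sum_cons]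
      have hcard : Multiset.card (p.parts.erase (x i)) = r := by
        rw [Multiset.card_erase_of_mem (hmem i), hp]; rfl
      have hlb : r ≤ (p.parts.erase (x i)).sum := by
        have := Multiset.card_nsmul_le_sum (s := p.parts.erase (x i)) (a := 1)
          (fun q hq => p.parts_pos (Multiset.mem_of_mem_erase hq))
        rw [hcard] at this
        simpa using this
      have hsum := p.parts_sum
      omega
    have hxs : ∑ i, x i = n + (r + 2) - 1 := by
      have : (List.ofFn x : Multiset ℕ).sum = n + (r + 2) - 1 := by
        rw [hms]; exact p.parts_sum
      rwa [Multiset.sum_coe, List.sum_ofFn] at this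
    refine ⟨⟨x, hxmono, hx1, hxle, hxs⟩, ?_⟩
    apply Subtype.ext
    apply Nat.Partition.ext
    exact hms
end
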